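/- Let (X, A, ν) be a σ-finite measure space. For k = 1, …, K let P_k be a probability measure on X with density f_k with respect to ν, let μ : X → (0, ∞) be measurable and ν-integrable, define the score s_k(x) = f_k(x)/μ(x), and let F_k(t) = P_k({ x' : s_k(x') ≤ t }). Fix α ∈ (0,1) and assume that for each k the distribution of s_k(X) under X ∼ P_k is atomless. Define the oracle set-valued prediction C(x) = { k : F_k(s_k(x)) ≥ α }. Then for every measurable set-valued prediction C' : X → (subsets of {1,…,K}) such that each set { x : k ∈ C'(x) } is measurable and P_k({ x : k ∈ C'(x) }) ≥ 1 − α for every k = 1, …, K, one has ∫ |C'(x)| μ(x) dν(x) ≥ ∫ |C(x)| μ(x) dν(x), where |C(x)| denotes the cardinality of C(x). That is, C solves the problem of minimizing the μ-weighted expected prediction-set size subject to per-class coverage at least 1 − α. -/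

import Mathlib

open MeasureTheory
open scoped Classical
open Filter

/-- Key per-class lemma: the oracle region `{x | α ≤ F (s x)}` is measurable and,
among all measurable sets `B` with `P B ≥ 1 - α`, it minimizes `∫ μ`. -/
lemma oracle_key {X : Type*} [MeasurableSpace X] (ν : Measure X)
    (f : X → ℝ) (hf : Measurable f) (hf0 : ∀ x, 0 ≤ f x)
    (μ : X → ℝ) (hμ : Measurable μ) (hμpos : ∀ x, 0 < μ x)
    (hμint : Integrable μ ν)
    (P : Measure X) (hP : P = ν.withDensity (fun x => ENNReal.ofReal (f x)))
    (hprob : IsProbabilityMeasure P)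
    (s : X → ℝ) (hs : ∀ x, s x = f x / μ x)
    (F : ℝ → ℝ) (hF : ∀ t, F t = (P {x' | s x' ≤ t}).toReal)
    (hatomless : ∀ t : ℝ, P {x' | s x' = t} = 0)
    (α : ℝ) (hα0 : 0 < α) (hα1 : α < 1) :
    MeasurableSet {x | α ≤ F (s x)} ∧
      ∀ B : Set X, MeasurableSet B → 1 - α ≤ (P B).toReal →
        ∫ x in {x | α ≤ F (s x)}, μ x ∂ν ≤ ∫ x in B, μ x ∂ν := by
  have hs_meas : Measurable s := by
    have : s = fun x => f x / μ x := funext hs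
    rw [this]; exact hf.div hμ
  have hs0 : ∀ x, 0 ≤ s x := fun x => by
    rw [hs x]; exact div_nonneg (hf0 x) (hμpos x).le
  have hPfin : ∀ E : Set X, P E ≠ ⊤ := fun E => measure_ne_top P E
  have hFmono : Monotone F := by
    intro t t' h
    rw [hF t, hF t']
    exact ENNReal.toReal_mono (hPfin _) (measure_mono fun x hx => le_trans hx h)
  -- the set S of thresholds achieving level α
  set S : Set ℝ := {t | α ≤ F t} with hS_def
  have hSne : S.Nonempty := by
    have hmono : Monotone (fun n : ℕ => {x | s x ≤ (n : ℝ)}) := by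
      intro n m hnm x hx
      simp only [Set.mem_setOf_eq] at hx ⊢
      exact le_trans hx (by exact_mod_cast hnm)
    have hU : Tendsto (fun n : ℕ => P {x | s x ≤ (n : ℝ)}) atTop
        (nhds (P (⋃ n : ℕ, {x | s x ≤ (n : ℝ)}))) :=
      tendsto_measure_iUnion_atTop (μ := P) hmono
    have hunion : (⋃ n : ℕ, {x | s x ≤ (n : ℝ)}) = Set.univ := by
      ext x
      simp only [Set.mem_iUnion, Set.mem_setOf_eq, Set.mem_univ, iff_true]
      obtain ⟨n, hn⟩ := exists_nat_ge (s x)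
      exact ⟨n, hn⟩
    rw [hunion, measure_univ] at hU
    have hUr : Tendsto (fun n : ℕ => F (n : ℝ)) atTop (nhds 1) := by
      have := (ENNReal.tendsto_toReal (by norm_num : (1 : ENNReal) ≠ ⊤)).comp hU
      simpa [Function.comp_def, hF] using this
    have : ∀ᶠ n : ℕ in atTop, α ≤ F (n : ℝ) :=
      hUr.eventually (eventually_ge_nhds hα1)
    obtain ⟨n, hn⟩ := this.exists
    exact ⟨(n : ℝ), hn⟩
  have hSlb : ∀ t ∈ S, (0 : ℝ) ≤ t := by
    intro t ht
    by_contra hlt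
    push_neg at hlt
    have hempty : {x' | s x' ≤ t} = ∅ := by
      ext x
      simp only [Set.mem_setOf_eq, Set.mem_empty_iff_false, iff_false, not_le]
      exact lt_of_lt_of_le hlt (hs0 x)
    have : F t = 0 := by rw [hF, hempty]; simp
    rw [hS_def, Set.mem_setOf_eq, this] at ht
    linarith
  have hSbdd : BddBelow S := ⟨0, hSlb⟩
  set c : ℝ := sInf S with hc_def
  have hcmem : ∀ t, c < t → t ∈ S := by
    intro t ht
    obtain ⟨a, haS, hat⟩ := exists_lt_of_csInf_lt hSne ht
    exact le_trans haS (hFmono hat.le)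
  -- right continuity: F c ≥ α
  have hFc : α ≤ F c := by
    have hseq : Tendsto (fun n : ℕ => c + 1 / (n + 1)) atTop (nhds c) := by
      have := tendsto_one_div_add_atTop_nhds_zero_nat (𝕜 := ℝ)
      have h2 := this.const_add c
      simpa using h2
    have hanti : Antitone (fun n : ℕ => {x | s x ≤ c + 1 / (n + 1)}) := by
      intro n m hnm x hx
      simp only [Set.mem_setOf_eq] at hx ⊢
      refine le_trans hx (add_le_add_right ?_ c)
      apply one_div_le_one_div_of_le
      · positivity
      · exact_mod_cast add_le_add_left (Nat.cast_le.mpr hnm) 1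
    have hD : Tendsto (fun n : ℕ => P {x | s x ≤ c + 1 / (n + 1)}) atTop
        (nhds (P (⋂ n : ℕ, {x | s x ≤ c + 1 / (n + 1)}))) :=
      tendsto_measure_iInter_atTop (μ := P)
        (fun n => (hs_meas measurableSet_Iic).nullMeasurableSet) hanti ⟨0, hPfin _⟩
    have hinter : (⋂ n : ℕ, {x | s x ≤ c + 1 / (n + 1)}) = {x | s x ≤ c} := by
      ext x
      simp only [Set.mem_iInter, Set.mem_setOf_eq]
      constructor
      · intro h
        exact ge_of_tendsto hseq (Filter.Eventually.of_forall h)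
      · intro h n
        have : (0 : ℝ) < 1 / (n + 1) := by positivity
        linarith
    rw [hinter] at hD
    have hDr : Tendsto (fun n : ℕ => F (c + 1 / (n + 1))) atTop (nhds (F c)) := by
      have := (ENNReal.tendsto_toReal (hPfin {x | s x ≤ c})).comp hD
      simpa [Function.comp_def, hF] using this
    refine ge_of_tendsto hDr (Filter.Eventually.of_forall fun n => ?_)
    apply hcmem
    have : (0 : ℝ) < 1 / (n + 1) := by positivity
    linarith
  have hcS : c ∈ S := hFc
  have hF0 : F 0 = 0 := by
    have hset : {x' | s x' ≤ (0 : ℝ)} = {x' | s x' = 0} := by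
      ext x
      simp only [Set.mem_setOf_eq]
      exact ⟨fun h => le_antisymm h (hs0 x), fun h => h.le⟩
    rw [hF, hset, hatomless 0]
    simp
  have hc0 : 0 < c := by
    have hge : 0 ≤ c := le_csInf hSne hSlb
    rcases hge.lt_or_eq with h | h
    · exact h
    · exfalso
      rw [← h] at hFc
      rw [hF0] at hFc
      linarith
  -- characterization of the oracle region
  set A : Set X := {x | α ≤ F (s x)} with hA_def
  have hA_eq : A = {x | c ≤ s x} := by
    ext x
    simp only [hA_def, Set.mem_setOf_eq]
    constructor
    · intro h
      exact csInf_le hSbdd h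
    · intro h
      exact le_trans hFc (hFmono h)
  have hA : MeasurableSet A := by
    rw [hA_eq]
    exact hs_meas measurableSet_Ici
  refine ⟨hA, ?_⟩
  intro B hB hBcov
  -- (P A).toReal ≤ 1 - α
  have hPA : (P A).toReal ≤ 1 - α := by
    have h1 : A ⊆ {x | c < s x} ∪ {x | s x = c} := by
      rw [hA_eq]
      intro x hx
      simp only [Set.mem_setOf_eq] at hx
      rcases lt_or_eq_of_le hx with h | h
      · exact Or.inl h
      · exact Or.inr h.symm
    have h2 : P A ≤ P {x | c < s x} := by
      calc P A ≤ P ({x | c < s x} ∪ {x | s x = c}) := measure_mono h1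
        _ ≤ P {x | c < s x} + P {x | s x = c} := measure_union_le _ _
        _ = P {x | c < s x} := by rw [hatomless c, add_zero]
    have h3 : {x | c < s x} = {x | s x ≤ c}ᶜ := by
      ext x; simp [not_le]
    have h4 : P {x | s x ≤ c}ᶜ = 1 - P {x | s x ≤ c} :=
      prob_compl_eq_one_sub (hs_meas measurableSet_Iic)
    have h5 : (P {x | s x ≤ c}ᶜ).toReal = 1 - F c := by
      rw [h4, ENNReal.toReal_sub_of_le prob_le_one (by norm_num), hF]
      norm_num
    calc (P A).toReal ≤ (P {x | s x ≤ c}ᶜ).toReal := by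
          rw [← h3]; exact ENNReal.toReal_mono (hPfin _) h2
      _ = 1 - F c := h5
      _ ≤ 1 - α := by linarith
  -- f is integrable and its set integrals are P-measures
  have hfint : Integrable f ν := by
    refine ⟨hf.aestronglyMeasurable, ?_⟩
    rw [hasFiniteIntegral_iff_ofReal (Filter.Eventually.of_forall hf0)]
    have : ∫⁻ x, ENNReal.ofReal (f x) ∂ν = P Set.univ := by
      rw [hP, withDensity_apply _ MeasurableSet.univ, Measure.restrict_univ]
    rw [this, measure_univ]
    norm_num
  have hsetf : ∀ E : Set X, MeasurableSet E → ∫ x in E, f x ∂ν = (P E).toReal := by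
    intro E hE
    have h1 : ENNReal.ofReal (∫ x in E, f x ∂ν) = ∫⁻ x in E, ENNReal.ofReal (f x) ∂ν :=
      ofReal_integral_eq_lintegral_ofReal hfint.integrableOn
        (Filter.Eventually.of_forall hf0)
    have h2 : P E = ENNReal.ofReal (∫ x in E, f x ∂ν) := by
      rw [hP, withDensity_apply _ hE, h1]
    rw [h2, ENNReal.toReal_ofReal]
    exact setIntegral_nonneg hE fun x _ => hf0 x
  -- pointwise inequalities
  have hptA : ∀ x ∈ A, c * μ x ≤ f x := by
    intro x hx
    rw [hA_eq] at hx
    have hx' : c ≤ f x / μ x := by rw [← hs x]; exact hx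
    rw [le_div_iff₀ (hμpos x)] at hx'
    linarith [hx']
  have hptAc : ∀ x, x ∉ A → f x ≤ c * μ x := by
    intro x hx
    rw [hA_eq] at hx
    simp only [Set.mem_setOf_eq, not_le] at hx
    have hx' : f x / μ x < c := by rw [← hs x]; exact hx
    rw [div_lt_iff₀ (hμpos x)] at hx'
    linarith [hx']
  -- integral decompositions
  have hμA : IntegrableOn μ (A \ B) ν := hμint.integrableOn
  have hμB : IntegrableOn μ (B \ A) ν := hμint.integrableOn
  have hd1 : ∫ x in A ∩ B, μ x ∂ν + ∫ x in A \ B, μ x ∂ν = ∫ x in A, μ x ∂ν :=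
    integral_inter_add_diff hB hμint.integrableOn
  have hd2 : ∫ x in B ∩ A, μ x ∂ν + ∫ x in B \ A, μ x ∂ν = ∫ x in B, μ x ∂ν :=
    integral_inter_add_diff hA hμint.integrableOn
  have hd3 : ∫ x in A ∩ B, f x ∂ν + ∫ x in A \ B, f x ∂ν = ∫ x in A, f x ∂ν :=
    integral_inter_add_diff hB hfint.integrableOn
  have hd4 : ∫ x in B ∩ A, f x ∂ν + ∫ x in B \ A, f x ∂ν = ∫ x in B, f x ∂ν :=
    integral_inter_add_diff hA hfint.integrableOn
  have hcomm : ∫ x in A ∩ B, μ x ∂ν = ∫ x in B ∩ A, μ x ∂ν := by rw [Set.inter_comm]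
  have hcommf : ∫ x in A ∩ B, f x ∂ν = ∫ x in B ∩ A, f x ∂ν := by rw [Set.inter_comm]
  -- Neyman–Pearson style inequalities
  have h3 : c * ∫ x in A \ B, μ x ∂ν ≤ ∫ x in A \ B, f x ∂ν := by
    rw [← integral_const_mul]
    apply setIntegral_mono_on ((hμint.const_mul c).integrableOn)
      hfint.integrableOn (hA.diff hB)
    intro x hx
    exact hptA x hx.1
  have h4 : ∫ x in B \ A, f x ∂ν ≤ c * ∫ x in B \ A, μ x ∂ν := by
    rw [← integral_const_mul]
    apply setIntegral_mono_on hfint.integrableOn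
      ((hμint.const_mul c).integrableOn) (hB.diff hA)
    intro x hx
    exact hptAc x hx.2
  have h6 : ∫ x in A, f x ∂ν - ∫ x in B, f x ∂ν ≤ 0 := by
    rw [hsetf A hA, hsetf B hB]
    linarith
  have hkey : c * (∫ x in A, μ x ∂ν - ∫ x in B, μ x ∂ν) ≤ 0 := by
    have : c * (∫ x in A, μ x ∂ν - ∫ x in B, μ x ∂ν)
        = c * ∫ x in A \ B, μ x ∂ν - c * ∫ x in B \ A, μ x ∂ν := by
      rw [← hd1, ← hd2, hcomm]; ring
    rw [this]
    have : ∫ x in A \ B, f x ∂ν - ∫ x in B \ A, f x ∂ν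
        = ∫ x in A, f x ∂ν - ∫ x in B, f x ∂ν := by
      rw [← hd3, ← hd4, hcommf]; ring
    linarith
  nlinarith [hkey, hc0]

/-- Optimality of the oracle construction (Proposition 1): among all measurable
set-valued predictions `C'` with per-class coverage at least `1 - α`, the oracle
`C x = {k | F k (s k x) ≥ α}` (with score `s k x = f k x / μ x` and atomless
score distributions) minimizes the `μ`-weighted expected prediction-set size. -/
theorem oracle_optimality {X : Type*} [MeasurableSpace X] (ν : Measure X) [SigmaFinite ν]
    (K : ℕ) (f : Fin K → X → ℝ)
    (hf : ∀ k, Measurable (f k)) (hf0 : ∀ k x, 0 ≤ f k x)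
    (P : Fin K → Measure X)
    (hP : ∀ k, P k = ν.withDensity (fun x => ENNReal.ofReal (f k x)))
    (hprob : ∀ k, IsProbabilityMeasure (P k))
    (μ : X → ℝ) (hμ : Measurable μ) (hμpos : ∀ x, 0 < μ x)
    (hμint : Integrable μ ν)
    (s : Fin K → X → ℝ) (hs : ∀ k x, s k x = f k x / μ x)
    (F : Fin K → ℝ → ℝ) (hF : ∀ k t, F k t = (P k {x' | s k x' ≤ t}).toReal)
    (hatomless : ∀ (k : Fin K) (t : ℝ), P k {x' | s k x' = t} = 0)
    (α : ℝ) (hα0 : 0 < α) (hα1 : α < 1)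
    (C' : X → Finset (Fin K))
    (hC'meas : ∀ k : Fin K, MeasurableSet {x | k ∈ C' x})
    (hC'cov : ∀ k : Fin K, 1 - α ≤ (P k {x | k ∈ C' x}).toReal) :
    ∫ x, ((Finset.univ.filter (fun k : Fin K => α ≤ F k (s k x))).card : ℝ) * μ x ∂ν
      ≤ ∫ x, ((C' x).card : ℝ) * μ x ∂ν := by
  have key : ∀ k : Fin K, MeasurableSet {x | α ≤ F k (s k x)} ∧
      ∀ B : Set X, MeasurableSet B → 1 - α ≤ (P k B).toReal →
        ∫ x in {x | α ≤ F k (s k x)}, μ x ∂ν ≤ ∫ x in B, μ x ∂ν :=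
    fun k => oracle_key ν (f k) (hf k) (hf0 k) μ hμ hμpos hμint (P k) (hP k) (hprob k)
      (s k) (hs k) (F k) (hF k) (hatomless k) α hα0 hα1
  have hAmeas : ∀ k : Fin K, MeasurableSet {x | α ≤ F k (s k x)} := fun k => (key k).1
  -- rewrite both integrands as sums of indicators
  have hLHS : (fun x => ((Finset.univ.filter (fun k : Fin K => α ≤ F k (s k x))).card : ℝ) * μ x)
      = fun x => ∑ k : Fin K, ({y | α ≤ F k (s k y)}.indicator μ) x := by
    funext x
    rw [Finset.card_filter]
    push_cast
    rw [Finset.sum_mul]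
    apply Finset.sum_congr rfl
    intro k _
    by_cases h : α ≤ F k (s k x)
    · simp [Set.indicator_of_mem, h, Set.mem_setOf_eq]
    · simp [Set.indicator_of_notMem, h, Set.mem_setOf_eq]
  have hRHS : (fun x => (((C' x).card : ℝ)) * μ x)
      = fun x => ∑ k : Fin K, ({y | k ∈ C' y}.indicator μ) x := by
    funext x
    have : (C' x).card = (Finset.univ.filter (fun k : Fin K => k ∈ C' x)).card := by
      congr 1
      ext k
      simp
    rw [this, Finset.card_filter]
    push_cast
    rw [Finset.sum_mul]
    apply Finset.sum_congr rfl
    intro k _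
    by_cases h : k ∈ C' x
    · simp [Set.indicator_of_mem, h, Set.mem_setOf_eq]
    · simp [Set.indicator_of_notMem, h, Set.mem_setOf_eq]
  rw [hLHS, hRHS]
  rw [integral_finset_sum _ (fun k _ => hμint.indicator (hAmeas k)),
    integral_finset_sum _ (fun k _ => hμint.indicator (hC'meas k))]
  apply Finset.sum_le_sum
  intro k _
  rw [integral_indicator (hAmeas k), integral_indicator (hC'meas k)]
  exact (key k).2 _ (hC'meas k) (hC'cov k)
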